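/- Let M, B, C be three non-collinear points of the Euclidean plane, and let A' be a point of the segment [B, C] such that ∠BMA' = ∠CMA' (i.e. A' is the foot of the internal bisector of the angle ∠BMC from M). Then |MA'| = (√(|MB|·|MC|) / (|MB| + |MC|)) · √((|MB| + |MC|)² − |BC|²). -/

import Mathlib

open EuclideanGeometry

private theorem collinear_aux (M B C : EuclideanSpace ℝ (Fin 2)) (r : ℝ)
    (hr : B - M = r • (C - M)) : Collinear ℝ ({M, B, C} : Set (EuclideanSpace ℝ (Fin 2))) := by
  rw [collinear_iff_of_mem (Set.mem_insert _ _)]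
  refine ⟨C - M, fun p hp => ?_⟩
  simp only [Set.mem_insert_iff, Set.mem_singleton_iff] at hp
  rcases hp with rfl | rfl | rfl
  · exact ⟨0, by simp⟩
  · exact ⟨r, by rw [← hr]; simp [vadd_eq_add]⟩
  · exact ⟨1, by simp⟩

private theorem alg_aux (m n p a b ww : ℝ) (hm0 : 0 < m) (hn0 : 0 < n)
    (hplt : p < m * n) (hpgt : -(m * n) < p)
    (ha : 0 ≤ a) (hb : 0 ≤ b) (hab : a + b = 1)
    (hww : 0 ≤ ww) (hw2 : ww ^ 2 = a^2 * m^2 + 2*a*b*p + b^2 * n^2)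
    (hcos : (a * m^2 + b * p) / (m * ww) = (a * p + b * n^2) / (n * ww)) :
    ww = Real.sqrt (m * n) / (m + n) * Real.sqrt ((m + n)^2 - (m^2 - 2*p + n^2)) := by
  have hw0 : 0 < ww := by
    rcases hww.lt_or_eq with h3 | h3
    · exact h3
    · exfalso
      rw [← h3] at hw2
      rcases eq_or_lt_of_le ha with ha0 | ha0
      · have hb1 : b = 1 := by linarith
        rw [← ha0, hb1] at hw2
        nlinarith
      · rcases eq_or_lt_of_le hb with hb0 | hb0
        · have ha1 : a = 1 := by linarith
          rw [← hb0, ha1] at hw2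
          nlinarith
        · nlinarith [mul_pos ha0 hb0, sq_nonneg (a * m - b * n)]
  rw [div_eq_div_iff (ne_of_gt (mul_pos hm0 hw0)) (ne_of_gt (mul_pos hn0 hw0))] at hcos
  have hstep : (n * (a * m^2 + b * p)) * ww = (m * (a * p + b * n^2)) * ww := by
    linear_combination hcos
  have hcos' : n * (a * m^2 + b * p) = m * (a * p + b * n^2) :=
    mul_right_cancel₀ (ne_of_gt hw0) hstep
  have hfac : (a * m - b * n) * (m * n - p) = 0 := by linear_combination hcos'
  have hambn : a * m = b * n := by
    rcases mul_eq_zero.mp hfac with h1 | h1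
    · linarith
    · exfalso; linarith
  have hmn0 : 0 < m + n := by linarith
  have haa : a = n / (m + n) := by
    field_simp
    linear_combination hambn + n * hab
  have hbb : b = m / (m + n) := by
    field_simp
    linear_combination (-1 : ℝ) * hambn + m * hab
  have hX : 0 ≤ (m + n)^2 - (m^2 - 2*p + n^2) := by nlinarith
  have key : ww^2 = m * n * ((m + n)^2 - (m^2 - 2*p + n^2)) / (m + n)^2 := by
    rw [hw2, haa, hbb]
    field_simp
    ring
  rw [← Real.sqrt_sq hww, key, Real.sqrt_div (mul_nonneg (by positivity) hX),
    Real.sqrt_mul (by positivity), Real.sqrt_sq (le_of_lt hmn0)]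
  ring

theorem statement7 (M B C A' : EuclideanSpace ℝ (Fin 2))
    (h : ¬ Collinear ℝ ({M, B, C} : Set (EuclideanSpace ℝ (Fin 2))))
    (hA' : A' ∈ segment ℝ B C)
    (hbis : ∠ B M A' = ∠ C M A') :
    dist M A' = (Real.sqrt (dist M B * dist M C) / (dist M B + dist M C)) *
      Real.sqrt ((dist M B + dist M C) ^ 2 - dist B C ^ 2) := by
  obtain ⟨a, b, ha, hb, hab, hA'eq⟩ := hA'
  set u : EuclideanSpace ℝ (Fin 2) := B - M with hu
  set v : EuclideanSpace ℝ (Fin 2) := C - M with hv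
  set w : EuclideanSpace ℝ (Fin 2) := A' - M with hwdef
  set m : ℝ := ‖u‖ with hm
  set n : ℝ := ‖v‖ with hn
  set p : ℝ := inner ℝ u v with hp
  have hMB : M ≠ B := ne₁₂_of_not_collinear h
  have hMC : M ≠ C := ne₁₃_of_not_collinear h
  have hm0 : 0 < m := by rw [hm]; simp [hu, sub_eq_zero, hMB.symm]
  have hn0 : 0 < n := by rw [hn]; simp [hv, sub_eq_zero, hMC.symm]
  have hplt : p < m * n := by
    rw [hp, hm, hn]
    rw [inner_lt_norm_mul_iff_real]
    intro heq
    refine h (collinear_aux M B C (‖u‖ / ‖v‖) ?_)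
    rw [← hu, ← hv, div_eq_inv_mul, ← smul_smul, ← heq, smul_smul,
      inv_mul_cancel₀ (ne_of_gt hn0), one_smul]
  have hpgt : -(m * n) < p := by
    have h2 : inner ℝ (-u) v < ‖(-u)‖ * ‖v‖ := by
      rw [inner_lt_norm_mul_iff_real]
      intro heq
      refine h (collinear_aux M B C (-(‖u‖ / ‖v‖)) ?_)
      simp only [norm_neg, smul_neg] at heq
      have heq' : ‖v‖ • u = -(‖u‖ • v) := by
        have := congrArg Neg.neg heq; simpa using this
      rw [← hu, ← hv, neg_smul, div_eq_inv_mul, ← smul_smul, ← smul_neg, ← heq', smul_smul,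
        inv_mul_cancel₀ (ne_of_gt hn0), one_smul]
    simpa [inner_neg_left, hp, hm, hn, neg_lt, norm_neg] using h2
  -- w in terms of u, v
  have hw : w = a • u + b • v := by
    have h1 : a • u + b • v = a • B + b • C - (a + b) • M := by
      rw [hu, hv, smul_sub, smul_sub, add_smul]; abel
    rw [hwdef, ← hA'eq, h1, hab, one_smul]
  have hw2 : ‖w‖ ^ 2 = a^2 * m^2 + 2*a*b*p + b^2 * n^2 := by
    rw [hw, norm_add_sq_real, norm_smul, norm_smul, real_inner_smul_left, real_inner_smul_right]
    simp only [Real.norm_eq_abs, abs_of_nonneg ha, abs_of_nonneg hb, ← hp, ← hm, ← hn]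
    ring
  -- cosine equality
  have hcosraw : (inner ℝ u w : ℝ) / (m * ‖w‖) = (inner ℝ v w : ℝ) / (n * ‖w‖) := by
    have h1 := congrArg Real.cos hbis
    unfold EuclideanGeometry.angle at h1
    rw [InnerProductGeometry.cos_angle, InnerProductGeometry.cos_angle] at h1
    exact h1
  have hiu : (inner ℝ u w : ℝ) = a * m^2 + b * p := by
    rw [hw, inner_add_right, real_inner_smul_right, real_inner_smul_right,
      real_inner_self_eq_norm_sq, ← hp, ← hm]
  have hiv : (inner ℝ v w : ℝ) = a * p + b * n^2 := by
    rw [hw, inner_add_right, real_inner_smul_right, real_inner_smul_right,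
      real_inner_self_eq_norm_sq, real_inner_comm, ← hp, ← hn]
  rw [hiu, hiv] at hcosraw
  -- distances
  have hdMB : dist M B = m := by rw [dist_comm, dist_eq_norm, hm, hu]
  have hdMC : dist M C = n := by rw [dist_comm, dist_eq_norm, hn, hv]
  have hdMA : dist M A' = ‖w‖ := by rw [dist_comm, dist_eq_norm, hwdef]
  have hdBC : dist B C ^ 2 = m^2 - 2*p + n^2 := by
    rw [dist_eq_norm, show B - C = u - v by rw [hu, hv]; abel, norm_sub_sq_real, ← hp, ← hm, ← hn]
  rw [hdMB, hdMC, hdMA, hdBC]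
  exact alg_aux m n p a b ‖w‖ hm0 hn0 hplt hpgt ha hb hab (norm_nonneg w) hw2 hcosraw
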